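/- (Quadratic form of the undirected signed matrix-weighted Laplacian.) Let A_{ij} be a signed matrix-weight assignment on N vertices that is undirected, i.e., A_{ij} = A_{ji} for all i ≠ j, and let sgn(A_{ij}) ∈ {1, 0, −1} be 1 if A_{ij} is positive semidefinite and nonzero, 0 if A_{ij} = 0, and −1 if A_{ij} is negative semidefinite and nonzero. Then for every x = (x_1,…,x_N) ∈ ℝ^{Nd}, xᵀ L x = (1/2) Σ_{i≠j} (x_i − sgn(A_{ij}) x_j)ᵀ |A_{ij}| (x_i − sgn(A_{ij}) x_j). In particular, L is symmetric positive semidefinite. -/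

import Mathlib

open Matrix Filter
open scoped Classical

/-- `|Q|` for a real symmetric matrix that is positive semidefinite or negative
semidefinite: it equals `Q` in the first case and `-Q` in the second. -/
noncomputable def absM {d : ℕ} (Q : Matrix (Fin d) (Fin d) ℝ) : Matrix (Fin d) (Fin d) ℝ :=
  if Q.PosSemidef then Q else -Q

/-- A signed matrix-weight assignment: for `i ≠ j`, each weight `A i j` is symmetric
and either positive semidefinite or negative semidefinite. -/
def SignedWeights {N d : ℕ} (A : Fin N → Fin N → Matrix (Fin d) (Fin d) ℝ) : Prop :=
  ∀ i j : Fin N, i ≠ j → (A i j).IsSymm ∧ ((A i j).PosSemidef ∨ (-(A i j)).PosSemidef)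

/-- The signed matrix-weighted Laplacian: `(i,j)` block `−A_{ij}` for `j ≠ i`, and
`(i,i)` block `Σ_{k≠i}|A_{ik}|`. -/
noncomputable def Lap {N d : ℕ} (A : Fin N → Fin N → Matrix (Fin d) (Fin d) ℝ) :
    Matrix (Fin N × Fin d) (Fin N × Fin d) ℝ :=
  fun p q =>
    if p.1 = q.1 then (∑ k ∈ Finset.univ.erase p.1, absM (A p.1 k)) p.2 q.2
    else (-(A p.1 q.1)) p.2 q.2

/-- The block-diagonal `Nd × Nd` matrix with `d × d` diagonal blocks `D 1, …, D N`. -/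
def blockDiag' {N d : ℕ} (D : Fin N → Matrix (Fin d) (Fin d) ℝ) :
    Matrix (Fin N × Fin d) (Fin N × Fin d) ℝ :=
  fun p q => if p.1 = q.1 then D p.1 p.2 q.2 else 0

/-- Matrix-weighted in-degree `Σ_{k∈N_i}|A_{ik}|` of vertex `i`
(weights `A i k = 0` contribute nothing). -/
noncomputable def inDeg {N d : ℕ} (A : Fin N → Fin N → Matrix (Fin d) (Fin d) ℝ)
    (i : Fin N) : Matrix (Fin d) (Fin d) ℝ :=
  ∑ k ∈ Finset.univ.erase i, absM (A i k)

/-- Matrix-weighted out-degree `Σ_{k∈N'_i}|A_{ki}|` of vertex `i`. -/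
noncomputable def outDeg {N d : ℕ} (A : Fin N → Fin N → Matrix (Fin d) (Fin d) ℝ)
    (i : Fin N) : Matrix (Fin d) (Fin d) ℝ :=
  ∑ k ∈ Finset.univ.erase i, absM (A k i)

/-- A positive–negative path from `i` to `j`: a sequence `i = p 0, …, p m = j` with
`m ≥ 1` in which every traversed weight `A_{p(s+1), p(s)}` is positive or negative
definite. -/
def PNPath {N d : ℕ} (A : Fin N → Fin N → Matrix (Fin d) (Fin d) ℝ) (i j : Fin N) : Prop :=
  ∃ m : ℕ, 0 < m ∧ ∃ p : Fin (m + 1) → Fin N, p 0 = i ∧ p (Fin.last m) = j ∧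
    ∀ s : Fin m, (A (p s.succ) (p s.castSucc)).PosDef ∨ (-(A (p s.succ) (p s.castSucc))).PosDef

/-- Vertex `j` is in-degree-dominated. -/
def InDegDom {N d : ℕ} (A : Fin N → Fin N → Matrix (Fin d) (Fin d) ℝ) (j : Fin N) : Prop :=
  (inDeg A j - outDeg A j).PosSemidef

/-- Assumption 1: `{1,…,N} = V1 ∪ V2` disjointly, every `j ∈ V2` is reached from some
`i ∈ V1` by a positive–negative path, and every `j ∈ V2` is in-degree-dominated. -/
def Assumption1 {N d : ℕ} (A : Fin N → Fin N → Matrix (Fin d) (Fin d) ℝ)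
    (V1 V2 : Finset (Fin N)) : Prop :=
  V1 ∪ V2 = Finset.univ ∧ V1 ∩ V2 = ∅ ∧
    (∀ j ∈ V2, ∃ i ∈ V1, PNPath A i j) ∧ (∀ j ∈ V2, InDegDom A j)

/-- `Ω_i`: the set of (other) vertices `j` with `A_{ij}` negative semidefinite and nonzero. -/
noncomputable def OmegaSet {N d : ℕ} (A : Fin N → Fin N → Matrix (Fin d) (Fin d) ℝ)
    (i : Fin N) : Finset (Fin N) :=
  (Finset.univ.erase i).filter fun j => (-(A i j)).PosSemidef ∧ A i j ≠ 0

/-- The scalar sign of a signed matrix weight: `1` if positive semidefinite and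
nonzero, `0` if zero, `−1` if negative semidefinite and nonzero. -/
noncomputable def sgnM {d : ℕ} (Q : Matrix (Fin d) (Fin d) ℝ) : ℝ :=
  if Q = 0 then 0 else if Q.PosSemidef then 1 else -1


section Aux

lemma absM_posSemidef {d : ℕ} {Q : Matrix (Fin d) (Fin d) ℝ}
    (h : Q.PosSemidef ∨ (-Q).PosSemidef) : (absM Q).PosSemidef := by
  unfold absM
  split
  · assumption
  · rcases h with h | h
    · contradiction
    · exact h

lemma sgnM_smul_absM {d : ℕ} {Q : Matrix (Fin d) (Fin d) ℝ} :
    sgnM Q • absM Q = Q := by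
  unfold sgnM absM
  by_cases h0 : Q = 0
  · subst h0; split <;> simp
  · rw [if_neg h0]
    by_cases hp : Q.PosSemidef
    · rw [if_pos hp, if_pos hp, one_smul]
    · rw [if_neg hp, if_neg hp]; simp

lemma sgnM_sq_smul_absM {d : ℕ} {Q : Matrix (Fin d) (Fin d) ℝ} :
    (sgnM Q * sgnM Q) • absM Q = absM Q := by
  unfold sgnM absM
  by_cases h0 : Q = 0
  · subst h0; split <;> simp
  · rw [if_neg h0]
    by_cases hp : Q.PosSemidef <;> simp [hp]

lemma dot_mulVec_symm {d : ℕ} {M : Matrix (Fin d) (Fin d) ℝ} (hM : M.IsSymm)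
    (u v : Fin d → ℝ) : v ⬝ᵥ M.mulVec u = u ⬝ᵥ M.mulVec v := by
  simp only [dotProduct, Matrix.mulVec, Finset.mul_sum]
  rw [Finset.sum_comm]
  refine Finset.sum_congr rfl fun a _ => Finset.sum_congr rfl fun b _ => ?_
  rw [← hM.apply a b]
  ring

lemma quad_expand {d : ℕ} (M : Matrix (Fin d) (Fin d) ℝ) (hM : M.IsSymm)
    (u v : Fin d → ℝ) (s : ℝ) :
    (u - s • v) ⬝ᵥ M.mulVec (u - s • v) =
      u ⬝ᵥ M.mulVec u - 2 * s * (u ⬝ᵥ M.mulVec v)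
        + (s * s) * (v ⬝ᵥ M.mulVec v) := by
  have hsym := dot_mulVec_symm hM u v
  simp only [sub_dotProduct, dotProduct_sub, Matrix.mulVec_sub,
    Matrix.mulVec_smul, smul_dotProduct, dotProduct_smul, smul_eq_mul]
  rw [hsym]
  ring

lemma sum_mulVec' {d m : ℕ} (M : Fin m → Matrix (Fin d) (Fin d) ℝ)
    (s : Finset (Fin m)) (v : Fin d → ℝ) :
    (∑ i ∈ s, M i).mulVec v = ∑ i ∈ s, (M i).mulVec v := by
  ext a
  simp only [Matrix.mulVec, dotProduct, Matrix.sum_apply, Finset.sum_apply,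
    Finset.sum_mul]
  exact Finset.sum_comm

lemma dot_sum' {d m : ℕ} (v : Fin d → ℝ) (s : Finset (Fin m)) (f : Fin m → Fin d → ℝ) :
    v ⬝ᵥ (∑ i ∈ s, f i) = ∑ i ∈ s, v ⬝ᵥ f i := by
  simp only [dotProduct, Finset.sum_apply, Finset.mul_sum]
  exact Finset.sum_comm

lemma erase_sum_comm {N : ℕ} (F : Fin N → Fin N → ℝ) :
    ∑ i : Fin N, ∑ j ∈ Finset.univ.erase i, F i j
      = ∑ i : Fin N, ∑ j ∈ Finset.univ.erase i, F j i := by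
  refine Finset.sum_comm' fun i j => ?_
  simp only [Finset.mem_univ, Finset.mem_erase, true_and, and_true]
  exact ⟨fun h => h.symm, fun h => h.symm⟩

end Aux

/-- (quadratic form of the undirected signed matrix-weighted
Laplacian); in particular `L` is symmetric positive semidefinite. -/
theorem stmt7 (N d : ℕ) (hN : 1 ≤ N) (hd : 1 ≤ d)
    (A : Fin N → Fin N → Matrix (Fin d) (Fin d) ℝ) (hA : SignedWeights A)
    (hund : ∀ i j : Fin N, i ≠ j → A i j = A j i) :
    (∀ x : Fin N × Fin d → ℝ,
      x ⬝ᵥ (Lap A).mulVec x =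
        (1 / 2 : ℝ) * ∑ i : Fin N, ∑ j ∈ Finset.univ.erase i,
          (fun a => x (i, a) - sgnM (A i j) * x (j, a)) ⬝ᵥ
            ((absM (A i j)).mulVec fun a => x (i, a) - sgnM (A i j) * x (j, a))) ∧
    (Lap A).PosSemidef := by
  have habs : ∀ i j : Fin N, i ≠ j → (absM (A i j)).PosSemidef :=
    fun i j hij => absM_posSemidef (hA i j hij).2
  have habs_symm : ∀ i j : Fin N, i ≠ j → (absM (A i j)).IsSymm :=
    fun i j hij => (habs i j hij).isHermitian
  have key : ∀ x : Fin N × Fin d → ℝ,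
      x ⬝ᵥ (Lap A).mulVec x =
        (1 / 2 : ℝ) * ∑ i : Fin N, ∑ j ∈ Finset.univ.erase i,
          (fun a => x (i, a) - sgnM (A i j) * x (j, a)) ⬝ᵥ
            ((absM (A i j)).mulVec fun a => x (i, a) - sgnM (A i j) * x (j, a)) := by
    intro x
    set y : Fin N → Fin d → ℝ := fun i a => x (i, a) with hy
    set T : Fin N → Fin N → ℝ := fun i j => y i ⬝ᵥ (absM (A i j)).mulVec (y i) with hT
    set U : Fin N → Fin N → ℝ := fun i j => y j ⬝ᵥ (absM (A i j)).mulVec (y j) with hU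
    set V : Fin N → Fin N → ℝ := fun i j => y i ⬝ᵥ (A i j).mulVec (y j) with hV
    -- Step 1: the Laplacian quadratic form decomposes
    have step1 : x ⬝ᵥ (Lap A).mulVec x =
        (∑ i : Fin N, ∑ j ∈ Finset.univ.erase i, T i j)
          - ∑ i : Fin N, ∑ j ∈ Finset.univ.erase i, V i j := by
      have expand : x ⬝ᵥ (Lap A).mulVec x
          = ∑ i : Fin N, ∑ a : Fin d, ∑ j : Fin N, ∑ b : Fin d,
              x (i, a) * (Lap A (i, a) (j, b) * x (j, b)) := by
        simp only [dotProduct, Matrix.mulVec, Finset.mul_sum]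
        rw [Fintype.sum_prod_type]
        refine Finset.sum_congr rfl fun i _ => Finset.sum_congr rfl fun a _ => ?_
        rw [Fintype.sum_prod_type]
      rw [expand, ← Finset.sum_sub_distrib]
      refine Finset.sum_congr rfl fun i _ => ?_
      have split_j : ∀ a : Fin d,
          ∑ j : Fin N, ∑ b : Fin d, x (i, a) * (Lap A (i, a) (j, b) * x (j, b))
            = (∑ b : Fin d, x (i, a) *
                ((∑ k ∈ Finset.univ.erase i, absM (A i k)) a b * x (i, b)))
              + ∑ j ∈ Finset.univ.erase i, ∑ b : Fin d,
                  x (i, a) * ((-(A i j)) a b * x (j, b)) := by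
        intro a
        rw [← Finset.add_sum_erase _ _ (Finset.mem_univ i)]
        congr 1
        · refine Finset.sum_congr rfl fun b _ => ?_
          simp [Lap]
        · refine Finset.sum_congr rfl fun j hj => Finset.sum_congr rfl fun b _ => ?_
          have hij : i ≠ j := fun h => (Finset.mem_erase.mp hj).1 h.symm
          simp only [Lap, if_neg hij]
      calc ∑ a : Fin d, ∑ j : Fin N, ∑ b : Fin d,
              x (i, a) * (Lap A (i, a) (j, b) * x (j, b))
          = (∑ a : Fin d, ∑ b : Fin d, x (i, a) *
                ((∑ k ∈ Finset.univ.erase i, absM (A i k)) a b * x (i, b)))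
            + ∑ a : Fin d, ∑ j ∈ Finset.univ.erase i, ∑ b : Fin d,
                x (i, a) * ((-(A i j)) a b * x (j, b)) := by
            simp only [split_j]
            rw [Finset.sum_add_distrib]
        _ = (∑ j ∈ Finset.univ.erase i, T i j) - ∑ j ∈ Finset.univ.erase i, V i j := by
            rw [sub_eq_add_neg]
            congr 1
            · -- diagonal block
              have hdot : y i ⬝ᵥ (∑ k ∈ Finset.univ.erase i, absM (A i k)).mulVec (y i)
                  = ∑ j ∈ Finset.univ.erase i, T i j := by
                rw [sum_mulVec', dot_sum']
              rw [← hdot]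
              simp only [dotProduct, Matrix.mulVec, Finset.mul_sum, hy]
            · -- off-diagonal blocks
              rw [Finset.sum_comm, ← Finset.sum_neg_distrib]
              refine Finset.sum_congr rfl fun j _ => ?_
              simp only [hV, hy, dotProduct, Matrix.mulVec, Finset.mul_sum,
                Matrix.neg_apply, neg_mul, mul_neg, Finset.sum_neg_distrib]
    -- Step 2: expand each summand of the right-hand side
    have per : ∀ i : Fin N, ∀ j ∈ Finset.univ.erase i,
        ((fun a => x (i, a) - sgnM (A i j) * x (j, a)) ⬝ᵥ
            ((absM (A i j)).mulVec fun a => x (i, a) - sgnM (A i j) * x (j, a)))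
          = T i j + U i j - 2 * V i j := by
      intro i j hj
      have hij : i ≠ j := fun h => (Finset.mem_erase.mp hj).1 h.symm
      have hfun : (fun a => x (i, a) - sgnM (A i j) * x (j, a))
          = y i - sgnM (A i j) • y j := by
        funext a; simp [hy]
      rw [hfun, quad_expand _ (habs_symm i j hij)]
      have h1 : y i ⬝ᵥ (A i j).mulVec (y j)
          = sgnM (A i j) * (y i ⬝ᵥ (absM (A i j)).mulVec (y j)) := by
        conv_lhs => rw [← sgnM_smul_absM (Q := A i j)]
        rw [Matrix.smul_mulVec, dotProduct_smul, smul_eq_mul]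
      have h2 : (sgnM (A i j) * sgnM (A i j)) * (y j ⬝ᵥ (absM (A i j)).mulVec (y j))
          = y j ⬝ᵥ (absM (A i j)).mulVec (y j) := by
        conv_rhs => rw [← sgnM_sq_smul_absM (Q := A i j)]
        rw [Matrix.smul_mulVec, dotProduct_smul, smul_eq_mul]
      rw [h2, hT, hU, hV]
      simp only [h1]
      ring
    -- Step 3: symmetry swap for the `U`-sum
    have swapU : ∑ i : Fin N, ∑ j ∈ Finset.univ.erase i, U i j
        = ∑ i : Fin N, ∑ j ∈ Finset.univ.erase i, T i j := by
      rw [erase_sum_comm U]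
      refine Finset.sum_congr rfl fun i _ => Finset.sum_congr rfl fun j hj => ?_
      have hij : i ≠ j := fun h => (Finset.mem_erase.mp hj).1 h.symm
      simp only [hU, hT]
      rw [hund j i (Ne.symm hij)]
    -- combine
    have hsum : ∑ i : Fin N, ∑ j ∈ Finset.univ.erase i,
        ((fun a => x (i, a) - sgnM (A i j) * x (j, a)) ⬝ᵥ
            ((absM (A i j)).mulVec fun a => x (i, a) - sgnM (A i j) * x (j, a)))
          = (∑ i : Fin N, ∑ j ∈ Finset.univ.erase i, T i j)
            + (∑ i : Fin N, ∑ j ∈ Finset.univ.erase i, U i j)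
            - 2 * ∑ i : Fin N, ∑ j ∈ Finset.univ.erase i, V i j := by
      rw [Finset.mul_sum]
      rw [← Finset.sum_add_distrib, ← Finset.sum_sub_distrib]
      refine Finset.sum_congr rfl fun i _ => ?_
      rw [Finset.mul_sum, ← Finset.sum_add_distrib, ← Finset.sum_sub_distrib]
      exact Finset.sum_congr rfl fun j hj => per i j hj
    rw [step1, hsum, swapU]
    ring
  refine ⟨key, Matrix.PosSemidef.of_dotProduct_mulVec_nonneg ?_ ?_⟩
  · -- Hermitian
    show (Lap A)ᴴ = Lap A
    ext p q
    rw [Matrix.conjTranspose_apply, star_trivial]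
    by_cases h : p.1 = q.1
    · simp only [Lap, if_pos h, if_pos h.symm]
      rw [h]
      simp only [Matrix.sum_apply]
      refine Finset.sum_congr rfl fun k hk => ?_
      have hk' : q.1 ≠ k := fun hh => (Finset.mem_erase.mp hk).1 hh.symm
      exact (habs_symm q.1 k hk').apply p.2 q.2
    · have h1 : q.1 ≠ p.1 := fun hh => h hh.symm
      simp only [Lap, if_neg h1, if_neg h]
      rw [hund q.1 p.1 h1]
      simp only [Matrix.neg_apply]
      rw [(hA p.1 q.1 h).1.apply p.2 q.2]
  · -- nonnegativity
    intro z
    rw [star_trivial]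
    have hkey := key z
    rw [hkey]
    have : (0:ℝ) ≤ ∑ i : Fin N, ∑ j ∈ Finset.univ.erase i,
        ((fun a => z (i, a) - sgnM (A i j) * z (j, a)) ⬝ᵥ
            ((absM (A i j)).mulVec fun a => z (i, a) - sgnM (A i j) * z (j, a))) := by
      refine Finset.sum_nonneg fun i _ => Finset.sum_nonneg fun j hj => ?_
      have hij : i ≠ j := fun h => (Finset.mem_erase.mp hj).1 h.symm
      have := (habs i j hij).dotProduct_mulVec_nonneg (fun a => z (i, a) - sgnM (A i j) * z (j, a))
      simpa using this
    linarith
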